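/- Let k ≥ 1 be an integer and let 0 ≤ a < b ≤ 1. Consider the one-dimensional split framework on [a,b] with uniform density p(u) = 1/(b − a) and g(u) = u^k. Then every best split s* satisfies 4·((s* − a)/(b − a))·((b − s*)/(b − a)) ≥ (1/(k(k+1)))^{2/3}. -/

import Mathlib

open MeasureTheory Set Real

noncomputable section

namespace RegressionTree16

/-- Impurity decrease on the node `[a,b]` for the uniform density `1/(b−a)` and
partial dependence function `g`:
`Δ(s) = (M(s) − M(b)P(s))²/(P(s)(1 − P(s)))` with `P(s) = (s−a)/(b−a)` and
`M(s) = ∫_a^s g(u)/(b−a) du` (and `Δ(a) = Δ(b) = 0`). -/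
def uniformDelta (a b : ℝ) (g : ℝ → ℝ) (s : ℝ) : ℝ :=
  ((∫ u in a..s, g u / (b - a)) - (∫ u in a..b, g u / (b - a)) * ((s - a) / (b - a))) ^ 2 /
    ((s - a) / (b - a) * (1 - (s - a) / (b - a)))

/-- Auxiliary polynomial `W k = ∑_{i=0}^{k} s^i (b^{k-i} - a^{k-i})` defined recursively. -/
def W (a b s : ℝ) : ℕ → ℝ
  | 0 => 0
  | (k+1) => s * W a b s k + (b ^ (k+1) - a ^ (k+1))

lemma W_identity (a b s : ℝ) : ∀ k : ℕ,
    (b ^ (k+1) - a ^ (k+1)) * (s - a) - (s ^ (k+1) - a ^ (k+1)) * (b - a)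
      = (s - a) * (b - s) * W a b s k
  | 0 => by simp [W]; ring
  | (k+1) => by
      have ih := W_identity a b s k
      show (b ^ (k+2) - a ^ (k+2)) * (s - a) - (s ^ (k+2) - a ^ (k+2)) * (b - a)
          = (s - a) * (b - s) * (s * W a b s k + (b ^ (k+1) - a ^ (k+1)))
      linear_combination s * ih

lemma W_nonneg (a b s : ℝ) (ha : 0 ≤ a) (hab : a ≤ b) (hs : 0 ≤ s) :
    ∀ k : ℕ, 0 ≤ W a b s k
  | 0 => le_refl 0
  | (k+1) => add_nonneg (mul_nonneg hs (W_nonneg a b s ha hab hs k))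
      (sub_nonneg.2 (pow_le_pow_left₀ ha hab (k+1)))

lemma W_mono (a b s : ℝ) (ha : 0 ≤ a) (hab : a ≤ b) (hs : 0 ≤ s) (hsb : s ≤ b) :
    ∀ k : ℕ, W a b s k ≤ W a b b k
  | 0 => le_refl 0
  | (k+1) => by
      have ih := W_mono a b s ha hab hs hsb k
      show s * W a b s k + (b ^ (k+1) - a ^ (k+1)) ≤ b * W a b b k + (b ^ (k+1) - a ^ (k+1))
      have h1 : s * W a b s k ≤ b * W a b b k :=
        mul_le_mul hsb ih (W_nonneg a b s ha hab hs k) (ha.trans hab)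
      linarith

lemma W_pos (a b : ℝ) (ha : 0 ≤ a) (hab : a < b) (j : ℕ) : 0 < W a b b (j+1) := by
  show 0 < b * W a b b j + (b ^ (j+1) - a ^ (j+1))
  have h1 : 0 ≤ b * W a b b j :=
    mul_nonneg (ha.trans hab.le) (W_nonneg a b b ha hab.le (ha.trans hab.le) j)
  have h2 : a ^ (j+1) < b ^ (j+1) := pow_lt_pow_left₀ hab ha (Nat.succ_ne_zero j)
  linarith

lemma W_ratio (a b s : ℝ) (ha : 0 ≤ a) (hab : a ≤ b) (hs : 0 ≤ s) (hsb : s ≤ b) :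
    ∀ j : ℕ, s ^ j * W a b b (j+1) ≤ b ^ j * W a b s (j+1)
  | 0 => by simp [W]
  | (j+1) => by
      have ih := W_ratio a b s ha hab hs hsb j
      have hb0 : 0 ≤ b := hs.trans hsb
      have hd : (0:ℝ) ≤ b ^ (j+2) - a ^ (j+2) :=
        sub_nonneg.2 (pow_le_pow_left₀ ha hab (j+2))
      have hsj : s ^ (j+1) ≤ b ^ (j+1) := pow_le_pow_left₀ hs hsb (j+1)
      have f1 : (s*b) * (s ^ j * W a b b (j+1)) ≤ (s*b) * (b ^ j * W a b s (j+1)) :=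
        mul_le_mul_of_nonneg_left ih (mul_nonneg hs hb0)
      have f2 : s ^ (j+1) * (b ^ (j+2) - a ^ (j+2)) ≤ b ^ (j+1) * (b ^ (j+2) - a ^ (j+2)) :=
        mul_le_mul_of_nonneg_right hsj hd
      show s ^ (j+1) * (b * W a b b (j+1) + (b ^ (j+2) - a ^ (j+2)))
          ≤ b ^ (j+1) * (s * W a b s (j+1) + (b ^ (j+2) - a ^ (j+2)))
      calc s ^ (j+1) * (b * W a b b (j+1) + (b ^ (j+2) - a ^ (j+2)))
          = (s*b) * (s ^ j * W a b b (j+1)) + s ^ (j+1) * (b ^ (j+2) - a ^ (j+2)) := by ring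
        _ ≤ (s*b) * (b ^ j * W a b s (j+1)) + b ^ (j+1) * (b ^ (j+2) - a ^ (j+2)) :=
            add_le_add f1 f2
        _ = b ^ (j+1) * (s * W a b s (j+1) + (b ^ (j+2) - a ^ (j+2))) := by ring

lemma delta_eq (k : ℕ) (a b s : ℝ) (hab : a < b) (hs : a ≤ s) (hsb : s ≤ b) :
    uniformDelta a b (fun u => u ^ k) s
      = (s - a) * (b - s) * (W a b s k) ^ 2 / (((k:ℝ)+1) ^ 2 * (b - a) ^ 2) := by
  have hδ : b - a ≠ 0 := sub_ne_zero.2 hab.ne'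
  have hk1 : ((k:ℝ)+1) ≠ 0 := by positivity
  unfold uniformDelta
  rw [intervalIntegral.integral_div, intervalIntegral.integral_div, integral_pow, integral_pow]
  rcases eq_or_lt_of_le hs with rfl | hs'
  · simp
  rcases eq_or_lt_of_le hsb with rfl | hsb'
  · rw [div_self hδ]
    simp
  have h1 : s - a ≠ 0 := sub_ne_zero.2 hs'.ne'
  have h2 : b - s ≠ 0 := sub_ne_zero.2 hsb'.ne'
  have hid := W_identity a b s k
  have hXi : (s ^ (k+1) - a ^ (k+1)) / ((k:ℝ)+1) / (b - a)
        - (b ^ (k+1) - a ^ (k+1)) / ((k:ℝ)+1) / (b - a) * ((s - a) / (b - a))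
      = ((s ^ (k+1) - a ^ (k+1)) * (b - a) - (b ^ (k+1) - a ^ (k+1)) * (s - a))
          / (((k:ℝ)+1) * (b - a) ^ 2) := by
    field_simp
  rw [hXi, show (s ^ (k+1) - a ^ (k+1)) * (b - a) - (b ^ (k+1) - a ^ (k+1)) * (s - a)
      = -((s - a) * (b - s) * W a b s k) by linear_combination -hid]
  rw [neg_div, neg_sq, div_pow]
  field_simp
  ring_nf
  have hinv : (b - s) * (b - s)⁻¹ = 1 := mul_inv_cancel₀ h2
  linear_combination W a b s k ^ 2 * hinv

lemma rpow_two_thirds_le (x R : ℝ) (hx : 0 ≤ x) (hR : 0 ≤ R) (h : x ^ 2 ≤ R ^ 3) :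
    x ^ ((2:ℝ)/3) ≤ R := by
  have h1 : x ^ ((2:ℝ)/3) = (x ^ (2:ℕ)) ^ ((1:ℝ)/3) := by
    rw [← Real.rpow_natCast x 2, ← Real.rpow_mul hx]; norm_num
  have h2 : R = (R ^ (3:ℕ)) ^ ((1:ℝ)/3) := by
    rw [← Real.rpow_natCast R 3, ← Real.rpow_mul hR]; norm_num
  rw [h1, h2]
  exact Real.rpow_le_rpow (pow_nonneg hx 2) h (by norm_num)

lemma poly_step (x : ℝ) (hx : 0 ≤ x) :
    64*(x+2) ^ 10 ≤ (2*x+3) ^ 3 * (x+4) ^ 6 * (x+1) ^ 2 := by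
  have hD : (2*x+3) ^ 3 * (x+4) ^ 6 * (x+1) ^ 2 - 64*(x+2) ^ 10
      = 45056 + 280576*x + 730368*x^2 + 1065728*x^3 + 977488*x^4 + 596168*x^5
        + 248971*x^6 + 72212*x^7 + 14587*x^8 + 2022*x^9 + 180*x^10 + 8*x^11 := by
    ring
  nlinarith [pow_nonneg hx 2, pow_nonneg hx 3, pow_nonneg hx 4, pow_nonneg hx 5,
    pow_nonneg hx 6, pow_nonneg hx 7, pow_nonneg hx 8, pow_nonneg hx 9,
    pow_nonneg hx 10, pow_nonneg hx 11, hD]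

lemma numeric (j : ℕ) :
    (1 / (((j:ℝ)+1) * ((j:ℝ)+2))) ^ ((2:ℝ)/3)
      ≤ 4 * ((1/(2*((j:ℝ)+2))) * (1 - 1/(2*((j:ℝ)+2)))
          * (1 - (j:ℝ)*(1/(2*((j:ℝ)+2)))) ^ 2) := by
  have hx : (0:ℝ) ≤ (j:ℝ) := Nat.cast_nonneg j
  set x : ℝ := (j:ℝ) with hxdef
  have h2 : (0:ℝ) < x + 2 := by linarith
  have hRval : 4 * ((1/(2*(x+2))) * (1 - 1/(2*(x+2))) * (1 - x*(1/(2*(x+2)))) ^ 2)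
      = (2*x+3) * (x+4) ^ 2 / (4 * (x+2) ^ 4) := by
    field_simp
    ring
  rw [hRval]
  apply rpow_two_thirds_le
  · positivity
  · positivity
  · rw [div_pow, div_pow, div_le_div_iff₀ (by positivity) (by positivity)]
    have step := poly_step x hx
    calc (1:ℝ) ^ 2 * (4 * (x+2) ^ 4) ^ 3 = (64*(x+2) ^ 10) * (x+2) ^ 2 := by ring
      _ ≤ ((2*x+3) ^ 3 * (x+4) ^ 6 * (x+1) ^ 2) * (x+2) ^ 2 :=
          mul_le_mul_of_nonneg_right step (by positivity)
      _ = ((2*x+3) * (x+4) ^ 2) ^ 3 * ((x+1) * (x+2)) ^ 2 := by ring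

/-- For `g(u) = u^k` on `[a,b] ⊆ [0,1]` with the uniform density, every
best split `s*` satisfies `4 P(s*)(1 − P(s*)) ≥ (1/(k(k+1)))^{2/3}`. -/
theorem monomial_balancedness (k : ℕ) (hk : 1 ≤ k)
    (a b : ℝ) (ha : 0 ≤ a) (hab : a < b) (hb : b ≤ 1)
    (sstar : ℝ) (hmem : sstar ∈ Set.Icc a b)
    (hmax : ∀ s ∈ Set.Icc a b,
      uniformDelta a b (fun u => u ^ k) s ≤ uniformDelta a b (fun u => u ^ k) sstar) :
    (1 / ((k : ℝ) * ((k : ℝ) + 1))) ^ ((2 : ℝ) / 3) ≤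
      4 * ((sstar - a) / (b - a)) * ((b - sstar) / (b - a)) := by
  obtain ⟨j, rfl⟩ : ∃ j, k = j + 1 := ⟨k - 1, (Nat.succ_pred_eq_of_pos hk).symm⟩
  obtain ⟨hs1, hs2⟩ := hmem
  have hb0 : 0 < b := ha.trans_lt hab
  have hδ : 0 < b - a := sub_pos.2 hab
  have hx : (0:ℝ) ≤ (j:ℝ) := Nat.cast_nonneg j
  obtain ⟨ee, hee0, heelt, hjee, hnumfact⟩ :
      ∃ ee : ℝ, 0 < ee ∧ ee ≤ 1/4 ∧ (j:ℝ)*ee ≤ 1/2 ∧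
        (1 / (((j:ℝ)+1) * ((j:ℝ)+2))) ^ ((2:ℝ)/3)
          ≤ 4 * (ee * (1 - ee) * (1 - (j:ℝ)*ee) ^ 2) := by
    refine ⟨1/(2*((j:ℝ)+2)), by positivity, ?_, ?_, numeric j⟩
    · rw [div_le_div_iff₀ (by positivity) (by norm_num)]
      linarith
    · rw [mul_one_div, div_le_div_iff₀ (by positivity) (by norm_num)]
      linarith
  have h1me : 0 ≤ 1 - (j:ℝ)*ee := by linarith
  set s0 : ℝ := b - ee*(b-a) with hs0def
  have hs0a : a ≤ s0 := by
    have h5 : ee*(b-a) ≤ (1/4)*(b-a) := mul_le_mul_of_nonneg_right heelt hδ.le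
    simp only [hs0def]; linarith
  have hs0b : s0 ≤ b := by
    have h5 : 0 ≤ ee*(b-a) := mul_nonneg hee0.le hδ.le
    simp only [hs0def]; linarith
  have hs0nn : 0 ≤ s0 := ha.trans hs0a
  have hsstar_nn : 0 ≤ sstar := ha.trans hs1
  have h := hmax s0 ⟨hs0a, hs0b⟩
  rw [delta_eq (j+1) a b s0 hab hs0a hs0b, delta_eq (j+1) a b sstar hab hs1 hs2] at h
  have hden : (0:ℝ) < (((j+1:ℕ):ℝ)+1) ^ 2 * (b - a) ^ 2 := by positivity
  have h' : (s0 - a) * (b - s0) * (W a b s0 (j+1)) ^ 2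
      ≤ (sstar - a) * (b - sstar) * (W a b sstar (j+1)) ^ 2 :=
    (div_le_div_iff_of_pos_right hden).1 h
  -- bounds on W
  have hWb_pos : 0 < W a b b (j+1) := W_pos a b ha hab j
  have hWs_le : W a b sstar (j+1) ≤ W a b b (j+1) :=
    W_mono a b sstar ha hab.le hsstar_nn hs2 (j+1)
  have hWs_nn : 0 ≤ W a b sstar (j+1) := W_nonneg a b sstar ha hab.le hsstar_nn (j+1)
  have hratio := W_ratio a b s0 ha hab.le hs0nn hs0b j
  -- Bernoulli lower bound for s0^j
  have hbern : (1 - (j:ℝ)*ee) * b ^ j ≤ s0 ^ j := by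
    have hb1 : b*(1-ee) ≤ s0 := by
      have h6 : 0 ≤ ee*a := mul_nonneg hee0.le ha
      simp only [hs0def]; nlinarith [h6]
    have hb1nn : 0 ≤ b*(1-ee) := mul_nonneg hb0.le (by linarith)
    have hbern0 : 1 - (j:ℝ)*ee ≤ (1-ee) ^ j := by
      have hB := one_add_mul_le_pow (show (-2:ℝ) ≤ -ee by linarith) j
      calc 1 - (j:ℝ)*ee = 1 + (j:ℝ) * (-ee) := by ring
        _ ≤ (1 + -ee) ^ j := hB
        _ = (1-ee) ^ j := by ring_nf
    calc (1 - (j:ℝ)*ee) * b ^ j ≤ (1-ee) ^ j * b ^ j :=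
          mul_le_mul_of_nonneg_right hbern0 (pow_nonneg hb0.le j)
      _ = (b*(1-ee)) ^ j := by rw [mul_pow]; ring
      _ ≤ s0 ^ j := pow_le_pow_left₀ hb1nn hb1 j
  have hW0_ge : (1 - (j:ℝ)*ee) * W a b b (j+1) ≤ W a b s0 (j+1) := by
    have hbj : (0:ℝ) < b ^ j := pow_pos hb0 j
    have h3 : ((1 - (j:ℝ)*ee) * b ^ j) * W a b b (j+1) ≤ s0 ^ j * W a b b (j+1) :=
      mul_le_mul_of_nonneg_right hbern hWb_pos.le
    refine le_of_mul_le_mul_left ?_ hbj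
    calc b ^ j * ((1 - (j:ℝ)*ee) * W a b b (j+1))
        = ((1 - (j:ℝ)*ee) * b ^ j) * W a b b (j+1) := by ring
      _ ≤ s0 ^ j * W a b b (j+1) := h3
      _ ≤ b ^ j * W a b s0 (j+1) := hratio
  -- squares
  have hsq1 : ((1 - (j:ℝ)*ee) * W a b b (j+1)) ^ 2 ≤ (W a b s0 (j+1)) ^ 2 :=
    pow_le_pow_left₀ (mul_nonneg h1me hWb_pos.le) hW0_ge 2
  have hsq2 : (W a b sstar (j+1)) ^ 2 ≤ (W a b b (j+1)) ^ 2 :=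
    pow_le_pow_left₀ hWs_nn hWs_le 2
  have key : ee*(1-ee)*((1 - (j:ℝ)*ee) * W a b b (j+1)) ^ 2 * (b-a) ^ 2
      ≤ (sstar - a) * (b - sstar) * (W a b b (j+1)) ^ 2 := by
    have e1 : (s0 - a) * (b - s0) = ee*(1-ee)*(b-a) ^ 2 := by
      simp only [hs0def]; ring
    have hpos : (0:ℝ) ≤ ee*(1-ee)*(b-a) ^ 2 := by
      have : (0:ℝ) ≤ 1 - ee := by linarith
      positivity
    calc ee*(1-ee)*((1 - (j:ℝ)*ee) * W a b b (j+1)) ^ 2 * (b-a) ^ 2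
        = (ee*(1-ee)*(b-a) ^ 2) * ((1 - (j:ℝ)*ee) * W a b b (j+1)) ^ 2 := by ring
      _ ≤ (ee*(1-ee)*(b-a) ^ 2) * (W a b s0 (j+1)) ^ 2 :=
          mul_le_mul_of_nonneg_left hsq1 hpos
      _ = (s0 - a) * (b - s0) * (W a b s0 (j+1)) ^ 2 := by rw [e1]
      _ ≤ (sstar - a) * (b - sstar) * (W a b sstar (j+1)) ^ 2 := h'
      _ ≤ (sstar - a) * (b - sstar) * (W a b b (j+1)) ^ 2 :=
          mul_le_mul_of_nonneg_left hsq2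
            (mul_nonneg (by linarith) (by linarith))
  have hWb2 : (0:ℝ) < (W a b b (j+1)) ^ 2 := pow_pos hWb_pos 2
  have key2 : ee*(1-ee)*(1 - (j:ℝ)*ee) ^ 2 * (b-a) ^ 2 ≤ (sstar - a) * (b - sstar) := by
    refine le_of_mul_le_mul_right ?_ hWb2
    calc ee*(1-ee)*(1 - (j:ℝ)*ee) ^ 2 * (b-a) ^ 2 * (W a b b (j+1)) ^ 2
        = ee*(1-ee)*((1 - (j:ℝ)*ee) * W a b b (j+1)) ^ 2 * (b-a) ^ 2 := by ring
      _ ≤ (sstar - a) * (b - sstar) * (W a b b (j+1)) ^ 2 := key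
  -- assemble
  have hgcast : ((j+1:ℕ):ℝ) = (j:ℝ) + 1 := by push_cast; ring
  rw [hgcast, show ((j:ℝ)+1) * (((j:ℝ)+1) + 1) = ((j:ℝ)+1) * ((j:ℝ)+2) by ring]
  calc (1 / (((j:ℝ)+1) * ((j:ℝ)+2))) ^ ((2:ℝ)/3)
      ≤ 4 * (ee * (1 - ee) * (1 - (j:ℝ)*ee) ^ 2) := hnumfact
    _ ≤ 4 * ((sstar - a) / (b - a)) * ((b - sstar) / (b - a)) := by
        have hne : b - a ≠ 0 := hδ.ne'
        rw [show 4 * ((sstar - a) / (b - a)) * ((b - sstar) / (b - a))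
            = 4 * ((sstar - a) * (b - sstar)) / ((b-a) ^ 2) by field_simp]
        rw [le_div_iff₀ (by positivity : (0:ℝ) < (b-a) ^ 2)]
        linarith [key2]

end RegressionTree16
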